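/- If G is a connected graph of order n ≥ 2 and k ≥ 2, then the distinguishing index of the k-fold join G + G + ⋯ + G (k copies) equals 2, except that D'(K₂ + K₂) = 3. -/

import Mathlib

open SimpleGraph

/-- The join of two graphs: disjoint union plus all edges between the parts. -/
def joinGraph {V W : Type*} (G : SimpleGraph V) (H : SimpleGraph W) : SimpleGraph (V ⊕ W) where
  Adj x y :=
    match x, y with
    | Sum.inl a, Sum.inl b => G.Adj a b
    | Sum.inr a, Sum.inr b => H.Adj a b
    | Sum.inl _, Sum.inr _ => True
    | Sum.inr _, Sum.inl _ => True
  symm := by refine ⟨?_⟩; rintro (a|a) (b|b) h <;> first | exact h.symm | trivial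
  loopless := by refine ⟨?_⟩; rintro (a|a) h <;> exact (SimpleGraph.irrefl _) h

instance joinGraphDecidableAdj {V W : Type*} {G : SimpleGraph V} {H : SimpleGraph W}
    [DecidableRel G.Adj] [DecidableRel H.Adj] : DecidableRel (joinGraph G H).Adj
  | Sum.inl a, Sum.inl b => inferInstanceAs (Decidable (G.Adj a b))
  | Sum.inr a, Sum.inr b => inferInstanceAs (Decidable (H.Adj a b))
  | Sum.inl _, Sum.inr _ => Decidable.isTrue trivial
  | Sum.inr _, Sum.inl _ => Decidable.isTrue trivial

/-- The distinguishing number: least `d` admitting a vertex `d`-labeling preserved only by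
the identity automorphism. -/
noncomputable def distinguishingNumber {V : Type*} (G : SimpleGraph V) : ℕ :=
  sInf {d : ℕ | ∃ c : V → Fin d, ∀ f : G ≃g G, (∀ v, c (f v) = c v) → ∀ v, f v = v}

/-- The distinguishing index: least `d` admitting an edge `d`-labeling preserved only by
the identity automorphism. -/
noncomputable def distinguishingIndex {V : Type*} (G : SimpleGraph V) : ℕ :=
  sInf {d : ℕ | ∃ c : Sym2 V → Fin d, ∀ f : G ≃g G,
    (∀ e ∈ G.edgeSet, c (Sym2.map (⇑f) e) = c e) → ∀ v, f v = v}

/-- The non-neighborhood of a vertex. -/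
def nonNbhd {V : Type*} (G : SimpleGraph V) (v : V) : Set V := {u | ¬ G.Adj v u}

/-- The k-fold join of a graph with itself. -/
def kJoin {V : Type*} (G : SimpleGraph V) (k : ℕ) : SimpleGraph (Fin k × V) where
  Adj x y := x.1 ≠ y.1 ∨ (x.1 = y.1 ∧ G.Adj x.2 y.2)
  symm := by
    refine ⟨?_⟩
    rintro x y (h | ⟨h1, h2⟩)
    · exact Or.inl h.symm
    · exact Or.inr ⟨h1.symm, h2.symm⟩
  loopless := by
    refine ⟨?_⟩
    rintro x (h | ⟨h1, h2⟩)
    · exact h rfl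
    · exact (SimpleGraph.irrefl _) h2

/-- `n` disjoint copies of `K₂`. -/
def nK2 (n : ℕ) : SimpleGraph (Fin n × Fin 2) where
  Adj x y := x.1 = y.1 ∧ x.2 ≠ y.2
  symm := by refine ⟨?_⟩; rintro x y ⟨h1, h2⟩; exact ⟨h1.symm, h2.symm⟩
  loopless := by refine ⟨?_⟩; rintro x ⟨h1, h2⟩; exact h2 rfl

/-- The friendship graph `Fₙ`: the join of `K₁` with `n` copies of `K₂`. -/
def friendshipGraph (n : ℕ) : SimpleGraph (Fin 1 ⊕ (Fin n × Fin 2)) :=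
  joinGraph (⊤ : SimpleGraph (Fin 1)) (nK2 n)

/-- A graph has a Hamiltonian path. -/
def HasHamiltonianPath {V : Type*} [DecidableEq V] (G : SimpleGraph V) : Prop :=
  ∃ (u v : V) (p : G.Walk u v), p.IsHamiltonian

set_option maxRecDepth 10000


/-- auxiliary red relation: path 0-1-...-(N-1) plus chord {1,m}. -/
def Radj (m : ℕ) {N : ℕ} (a b : Fin N) : Prop :=
  a.val + 1 = b.val ∨ b.val + 1 = a.val ∨ (a.val = 1 ∧ b.val = m) ∨ (a.val = m ∧ b.val = 1)

instance {m N : ℕ} (a b : Fin N) : Decidable (Radj m a b) := by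
  unfold Radj; infer_instance

lemma radj_symm {m N : ℕ} (a b : Fin N) : Radj m a b ↔ Radj m b a := by
  unfold Radj; tauto

/-- the path-with-chord graph is asymmetric. -/
lemma radj_asym {N m : ℕ} (hm : m = 3 ∨ m = 4) (hN : m + 3 ≤ N)
    (g : Fin N ≃ Fin N) (hg : ∀ p q, Radj m p q ↔ Radj m (g p) (g q)) :
    ∀ p, g p = p := by
  have hN6 : 6 ≤ N := by omega
  have inj : ∀ {a b : Fin N}, g a = g b → a = b := fun h => g.injective h
  have injs : ∀ {a b : Fin N}, g.symm a = g.symm b → a = b := fun h => g.symm.injective h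
  have key : ∀ j : ℕ, ∀ hj : j < N, (g ⟨j, hj⟩).val = j := by
    intro j
    induction j using Nat.strong_induction_on with
    | _ j IH =>
      intro hj
      have fix : ∀ i : ℕ, i < j → ∀ hi : i < N, g ⟨i, hi⟩ = ⟨i, hi⟩ := by
        intro i hij hi; exact Fin.ext (IH i hij hi)
      rcases Nat.lt_or_ge j 3 with hj3 | hj3
      · interval_cases j
        · -- j = 0 : show (g 0).val = 0
          have leaf : ∀ w, Radj m (g ⟨0, hj⟩) w → w = g ⟨1, by omega⟩ := by
            intro w hw
            have h1 : Radj m (⟨0, hj⟩ : Fin N) (g.symm w) := by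
              have h2 := (hg ⟨0, hj⟩ (g.symm w)).mpr
              rw [Equiv.apply_symm_apply] at h2
              exact h2 hw
            have h1' : (0:ℕ) + 1 = (g.symm w).val ∨ (g.symm w).val + 1 = 0 ∨
                ((0:ℕ) = 1 ∧ (g.symm w).val = m) ∨ ((0:ℕ) = m ∧ (g.symm w).val = 1) := h1
            have hv : (g.symm w).val = 1 := by omega
            have h3 : g.symm w = (⟨1, by omega⟩ : Fin N) := Fin.ext hv
            rw [← h3, Equiv.apply_symm_apply]
          have h01 : Radj m (⟨0, hj⟩ : Fin N) ⟨1, by omega⟩ := Or.inl rfl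
          have hadj01 : Radj m (g ⟨0, hj⟩) (g ⟨1, by omega⟩) := (hg _ _).mp h01
          set u := g ⟨0, hj⟩ with hu
          have hcases : u.val = 0 ∨ u.val = N - 1 := by
            by_contra hcon
            push_neg at hcon
            have hu1 : 1 ≤ u.val := by omega
            have hu2 : u.val + 1 < N := by have := u.isLt; omega
            have w1 : Radj m u ⟨u.val - 1, by omega⟩ :=
              Or.inr (Or.inl (show u.val - 1 + 1 = u.val by omega))
            have w2 : Radj m u ⟨u.val + 1, hu2⟩ := Or.inl rfl
            have e1 := leaf _ w1
            have e2 := leaf _ w2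
            rw [← e2] at e1
            have e3 : u.val - 1 = u.val + 1 := congrArg Fin.val e1
            omega
          rcases hcases with h0 | hN1
          · exact h0
          · exfalso
            have hg1 : (g ⟨1, by omega⟩).val = N - 2 := by
              have h' : u.val + 1 = (g ⟨1, by omega⟩).val ∨ (g ⟨1, by omega⟩).val + 1 = u.val ∨
                  (u.val = 1 ∧ (g ⟨1, by omega⟩).val = m) ∨
                  (u.val = m ∧ (g ⟨1, by omega⟩).val = 1) := hadj01
              have := (g ⟨1, by omega⟩).isLt
              omega
            have r0 : Radj m (⟨1, by omega⟩ : Fin N) ⟨0, by omega⟩ := Or.inr (Or.inl rfl)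
            have r2 : Radj m (⟨1, by omega⟩ : Fin N) ⟨2, by omega⟩ := Or.inl rfl
            have rm : Radj m (⟨1, by omega⟩ : Fin N) ⟨m, by omega⟩ :=
              Or.inr (Or.inr (Or.inl ⟨rfl, rfl⟩))
            have nb : ∀ w : Fin N, Radj m (g ⟨1, by omega⟩) w → w.val = N - 3 ∨ w.val = N - 1 := by
              intro w hw
              have h' : (g ⟨1, by omega⟩).val + 1 = w.val ∨ w.val + 1 = (g ⟨1, by omega⟩).val ∨
                  ((g ⟨1, by omega⟩).val = 1 ∧ w.val = m) ∨
                  ((g ⟨1, by omega⟩).val = m ∧ w.val = 1) := hw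
              have := w.isLt
              omega
            have v0 := nb _ ((hg _ _).mp r0)
            have v2 := nb _ ((hg _ _).mp r2)
            have vm := nb _ ((hg _ _).mp rm)
            have n02 : (g (⟨0, by omega⟩ : Fin N)).val ≠ (g (⟨2, by omega⟩ : Fin N)).val := by
              intro h
              have : (0:ℕ) = 2 := congrArg Fin.val (inj (Fin.ext h))
              omega
            have n0m : (g (⟨0, by omega⟩ : Fin N)).val ≠ (g (⟨m, by omega⟩ : Fin N)).val := by
              intro h
              have : (0:ℕ) = m := congrArg Fin.val (inj (Fin.ext h))
              omega
            have n2m : (g (⟨2, by omega⟩ : Fin N)).val ≠ (g (⟨m, by omega⟩ : Fin N)).val := by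
              intro h
              have : (2:ℕ) = m := congrArg Fin.val (inj (Fin.ext h))
              omega
            omega
        · -- j = 1
          have h01 : Radj m (⟨0, by omega⟩ : Fin N) ⟨1, hj⟩ := Or.inl rfl
          have h := (hg _ _).mp h01
          rw [fix 0 (by omega) (by omega)] at h
          have h' : (0:ℕ) + 1 = (g ⟨1, hj⟩).val ∨ (g ⟨1, hj⟩).val + 1 = 0 ∨
              ((0:ℕ) = 1 ∧ (g ⟨1, hj⟩).val = m) ∨ ((0:ℕ) = m ∧ (g ⟨1, hj⟩).val = 1) := h
          omega
        · -- j = 2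
          have h12 : Radj m (⟨1, by omega⟩ : Fin N) ⟨2, hj⟩ := Or.inl rfl
          have h := (hg _ _).mp h12
          rw [fix 1 (by omega) (by omega)] at h
          have h' : (1:ℕ) + 1 = (g ⟨2, hj⟩).val ∨ (g ⟨2, hj⟩).val + 1 = 1 ∨
              ((1:ℕ) = 1 ∧ (g ⟨2, hj⟩).val = m) ∨ ((1:ℕ) = m ∧ (g ⟨2, hj⟩).val = 1) := h
          have hvals : (g ⟨2, hj⟩).val = 0 ∨ (g ⟨2, hj⟩).val = 2 ∨ (g ⟨2, hj⟩).val = m := by omega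
          rcases hvals with h0 | h2 | hm'
          · exfalso
            have he : g ⟨2, hj⟩ = g ⟨0, by omega⟩ := by
              rw [fix 0 (by omega) (by omega)]; exact Fin.ext h0
            have : (2:ℕ) = 0 := congrArg Fin.val (inj he)
            omega
          · exact h2
          · exfalso
            have rm1 : Radj m (g ⟨2, hj⟩) ⟨m - 1, by omega⟩ :=
              Or.inr (Or.inl (show m - 1 + 1 = (g ⟨2, hj⟩).val by omega))
            have rm2 : Radj m (g ⟨2, hj⟩) ⟨m + 1, by omega⟩ :=
              Or.inl (show (g ⟨2, hj⟩).val + 1 = m + 1 by omega)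
            have rm3 : Radj m (g ⟨2, hj⟩) ⟨1, by omega⟩ :=
              Or.inr (Or.inr (Or.inr ⟨hm', rfl⟩))
            have back : ∀ w : Fin N, Radj m (g ⟨2, hj⟩) w →
                (g.symm w).val = 1 ∨ (g.symm w).val = 3 := by
              intro w hw
              have h2w : Radj m (⟨2, hj⟩ : Fin N) (g.symm w) := by
                have h3 := (hg ⟨2, hj⟩ (g.symm w)).mpr
                rw [Equiv.apply_symm_apply] at h3
                exact h3 hw
              have h2w' : (2:ℕ) + 1 = (g.symm w).val ∨ (g.symm w).val + 1 = 2 ∨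
                  ((2:ℕ) = 1 ∧ (g.symm w).val = m) ∨ ((2:ℕ) = m ∧ (g.symm w).val = 1) := h2w
              omega
            have b1 := back _ rm1
            have b2 := back _ rm2
            have b3 := back _ rm3
            have n12 : (g.symm (⟨m - 1, by omega⟩ : Fin N)).val ≠
                (g.symm (⟨m + 1, by omega⟩ : Fin N)).val := by
              intro h
              have : m - 1 = m + 1 := congrArg Fin.val (injs (Fin.ext h))
              omega
            have n13 : (g.symm (⟨m - 1, by omega⟩ : Fin N)).val ≠
                (g.symm (⟨1, by omega⟩ : Fin N)).val := by
              intro h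
              have : m - 1 = 1 := congrArg Fin.val (injs (Fin.ext h))
              omega
            have n23 : (g.symm (⟨m + 1, by omega⟩ : Fin N)).val ≠
                (g.symm (⟨1, by omega⟩ : Fin N)).val := by
              intro h
              have : m + 1 = 1 := congrArg Fin.val (injs (Fin.ext h))
              omega
            omega
      · -- j ≥ 3
        have hpN : j - 1 < N := by omega
        have hpj : Radj m (⟨j - 1, hpN⟩ : Fin N) ⟨j, hj⟩ :=
          Or.inl (show j - 1 + 1 = j by omega)
        have h := (hg _ _).mp hpj
        rw [fix (j-1) (by omega) hpN] at h
        have h' : (j - 1) + 1 = (g ⟨j, hj⟩).val ∨ (g ⟨j, hj⟩).val + 1 = j - 1 ∨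
            (j - 1 = 1 ∧ (g ⟨j, hj⟩).val = m) ∨ (j - 1 = m ∧ (g ⟨j, hj⟩).val = 1) := h
        by_cases hpm : j - 1 = m
        · have hvals : (g ⟨j, hj⟩).val = m - 1 ∨ (g ⟨j, hj⟩).val = m + 1 ∨
              (g ⟨j, hj⟩).val = 1 := by omega
          rcases hvals with h1 | h2 | h3
          · exfalso
            have he : g ⟨j, hj⟩ = g ⟨m - 1, by omega⟩ := by
              rw [fix (m-1) (by omega) (by omega)]; exact Fin.ext h1
            have : j = m - 1 := congrArg Fin.val (inj he)
            omega
          · omega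
          · exfalso
            have he : g ⟨j, hj⟩ = g ⟨1, by omega⟩ := by
              rw [fix 1 (by omega) (by omega)]; exact Fin.ext h3
            have : j = 1 := congrArg Fin.val (inj he)
            omega
        · have hvals : (g ⟨j, hj⟩).val = j - 2 ∨ (g ⟨j, hj⟩).val = j := by omega
          rcases hvals with h1 | h2
          · exfalso
            have he : g ⟨j, hj⟩ = g ⟨j - 2, by omega⟩ := by
              rw [fix (j-2) (by omega) (by omega)]; exact Fin.ext h1
            have : j = j - 2 := congrArg Fin.val (inj he)
            omega
          · omega
  intro p
  exact Fin.ext (by simpa using key p.val p.isLt)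

/-- The position equivalence `Fin k × V ≃ Fin (k * n)`, sending `(i, v)` to `e v * k + i`. -/
def posEquiv {V : Type*} (k n : ℕ) (hk : 0 < k) (e : V ≃ Fin n) :
    Fin k × V ≃ Fin (k * n) where
  toFun x := ⟨(e x.2).val * k + x.1.val, by
    have h1 : (e x.2).val * k + x.1.val < (e x.2).val * k + k := by
      omega
    have h2 : (e x.2).val * k + k = ((e x.2).val + 1) * k := by ring
    have h3 : ((e x.2).val + 1) * k ≤ n * k := Nat.mul_le_mul_right k (e x.2).isLt
    have := x.1.isLt
    calc (e x.2).val * k + x.1.val < ((e x.2).val + 1) * k := by omega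
    _ ≤ n * k := h3
    _ = k * n := Nat.mul_comm n k⟩
  invFun p := (⟨p.val % k, Nat.mod_lt _ hk⟩,
    e.symm ⟨p.val / k, by
      have h1 := p.isLt
      have h2 : k * n = n * k := Nat.mul_comm k n
      rw [Nat.div_lt_iff_lt_mul hk]
      omega⟩)
  left_inv x := by
    obtain ⟨i, v⟩ := x
    have h1 : ((e v).val * k + i.val) % k = i.val := by
      rw [Nat.mul_comm, Nat.mul_add_mod]
      exact Nat.mod_eq_of_lt i.isLt
    have h2 : ((e v).val * k + i.val) / k = (e v).val := by
      rw [Nat.mul_comm, Nat.mul_add_div hk, Nat.div_eq_of_lt i.isLt, Nat.add_zero]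
    refine Prod.ext (Fin.ext h1) ?_
    show e.symm _ = v
    rw [Equiv.symm_apply_eq]
    exact Fin.ext h2
  right_inv p := by
    refine Fin.ext ?_
    show (e (e.symm _)).val * k + p.val % k = p.val
    rw [Equiv.apply_symm_apply]
    show (p.val / k) * k + p.val % k = p.val
    rw [Nat.mul_comm]
    exact Nat.div_add_mod p.val k

lemma posEquiv_fst {V : Type*} (k n : ℕ) (hk : 0 < k) (e : V ≃ Fin n) (x : Fin k × V) :
    (posEquiv k n hk e x).val % k = x.1.val := by
  have hv : (posEquiv k n hk e x).val = (e x.2).val * k + x.1.val := rfl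
  rw [hv, Nat.mul_comm, Nat.mul_add_mod]
  exact Nat.mod_eq_of_lt x.1.isLt

/-- consecutive numbers have distinct residues mod `k ≥ 2`. -/
lemma mod_succ_ne {k p : ℕ} (hk : 2 ≤ k) : (p + 1) % k ≠ p % k := by
  intro h
  have h2 : p ≡ p + 1 [MOD k] := h.symm
  have h3 := (Nat.modEq_iff_dvd' (Nat.le_succ p)).mp h2
  have h4 : k ∣ 1 := by simpa using h3
  have := Nat.le_of_dvd one_pos h4
  omega

lemma mod_one_ne_m {k m : ℕ} (hk : 2 ≤ k) (hm : m = if k = 2 then 4 else 3) :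
    1 % k ≠ m % k := by
  have h1 : 1 % k = 1 := Nat.mod_eq_of_lt (by omega)
  by_cases h2 : k = 2
  · subst h2; simp at hm; subst hm; simp
  · have hm3 : m = 3 := by rw [hm, if_neg h2]
    subst hm3
    have hk3 : 3 ≤ k := by omega
    intro h
    have h3 : 1 ≡ 3 [MOD k] := h
    have h4 := (Nat.modEq_iff_dvd' (by omega)).mp h3
    have : k ≤ 2 := Nat.le_of_dvd (by omega) (by simpa using h4)
    omega

/-- red edges of the asymmetric subgraph are edges of the k-fold join. -/
lemma radj_mod_ne {k m N : ℕ} (hk : 2 ≤ k) (hm : m = if k = 2 then 4 else 3)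
    {p q : Fin N} (h : Radj m p q) : p.val % k ≠ q.val % k := by
  rcases h with h1 | h2 | ⟨h3, h4⟩ | ⟨h5, h6⟩
  · rw [← h1]; exact (mod_succ_ne hk).symm
  · rw [← h2]; exact mod_succ_ne hk
  · rw [h3, h4]; exact mod_one_ne_m hk hm
  · rw [h5, h6]; exact (mod_one_ne_m hk hm).symm

lemma posEquiv_val {V : Type*} (k n : ℕ) (hk : 0 < k) (e : V ≃ Fin n) (x : Fin k × V) :
    (posEquiv k n hk e x).val = (e x.2).val * k + x.1.val := rfl

lemma exists_coloring {V : Type*} [Fintype V] (G : SimpleGraph V) (k m : ℕ)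
    (hk : 2 ≤ k) (hm : m = if k = 2 then 4 else 3)
    (hN : m + 3 ≤ k * Fintype.card V) :
    ∃ c : Sym2 (Fin k × V) → Fin 2, ∀ f : kJoin G k ≃g kJoin G k,
      (∀ e ∈ (kJoin G k).edgeSet, c (Sym2.map (⇑f) e) = c e) → ∀ v, f v = v := by
  set n := Fintype.card V with hn
  have hk0 : 0 < k := by omega
  set pos := posEquiv k n hk0 (Fintype.equivFin V) with hpos
  refine ⟨Sym2.lift ⟨fun x y => if Radj m (pos x) (pos y) then (0 : Fin 2) else 1, ?_⟩, ?_⟩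
  · intro x y
    simp only [radj_symm (pos x) (pos y)]
  · intro f hf
    -- red edges are join edges
    have hRH : ∀ x y : Fin k × V, Radj m (pos x) (pos y) → (kJoin G k).Adj x y := by
      intro x y h
      have h1 := radj_mod_ne hk hm h
      rw [posEquiv_fst, posEquiv_fst] at h1
      exact Or.inl (fun hxy => h1 (congrArg Fin.val hxy))
    -- color equation on join edges
    have heq : ∀ x y : Fin k × V, (kJoin G k).Adj x y →
        ((if Radj m (pos (f x)) (pos (f y)) then (0 : Fin 2) else 1) =
          if Radj m (pos x) (pos y) then (0 : Fin 2) else 1) := by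
      intro x y hxy
      have h2 := hf s(x, y) ((kJoin G k).mem_edgeSet.mpr hxy)
      rw [Sym2.map_pair_eq] at h2
      simpa using h2
    have hiff : ∀ x y : Fin k × V, (kJoin G k).Adj x y →
        (Radj m (pos x) (pos y) ↔ Radj m (pos (f x)) (pos (f y))) := by
      intro x y hxy
      have h2 := heq x y hxy
      by_cases ha : Radj m (pos x) (pos y) <;> by_cases hb : Radj m (pos (f x)) (pos (f y)) <;>
        simp [ha, hb] at h2 ⊢
    set g : Fin (k * n) ≃ Fin (k * n) := pos.symm.trans (f.toEquiv.trans pos) with hgdef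
    have hgapp : ∀ p, g p = pos (f (pos.symm p)) := fun p => rfl
    have hg : ∀ p q, Radj m p q ↔ Radj m (g p) (g q) := by
      intro p q
      rw [hgapp, hgapp]
      set x := pos.symm p with hx
      set y := pos.symm q with hy
      have hpx : pos x = p := pos.apply_symm_apply p
      have hpy : pos y = q := pos.apply_symm_apply q
      constructor
      · intro h
        rw [← hpx, ← hpy] at h
        exact (hiff x y (hRH x y h)).mp h
      · intro h
        have hadj : (kJoin G k).Adj (f x) (f y) := hRH _ _ h
        have hxy : (kJoin G k).Adj x y := f.map_adj_iff.mp hadj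
        rw [← hpx, ← hpy]
        exact (hiff x y hxy).mpr h
    have hm34 : m = 3 ∨ m = 4 := by
      by_cases h : k = 2 <;> simp [h] at hm <;> omega
    have hgid := radj_asym hm34 hN g hg
    intro v
    have h1 : pos (f v) = pos v := by
      have := hgid (pos v)
      rw [hgapp, pos.symm_apply_apply] at this
      exact this
    exact pos.injective h1

lemma mem_pair_of_card_two {V : Type*} [Fintype V] [DecidableEq V]
    (h2 : Fintype.card V = 2) {u v : V} (huv : u ≠ v) (a : V) : a = u ∨ a = v := by
  have hcard : ({u, v} : Finset V).card = 2 := by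
    rw [Finset.card_insert_of_notMem (by simpa using huv), Finset.card_singleton]
  have huniv := Finset.eq_univ_of_card _ (hcard.trans h2.symm)
  have ha : a ∈ ({u, v} : Finset V) := huniv ▸ Finset.mem_univ a
  simpa using ha

lemma adj_of_card_two {V : Type*} [Fintype V] {G : SimpleGraph V} (hG : G.Connected)
    (h2 : Fintype.card V = 2) {u v : V} (huv : u ≠ v) : G.Adj u v := by
  classical
  obtain ⟨w⟩ := hG.preconnected u v
  cases w with
  | nil => exact absurd rfl huv
  | cons h p =>
    rename_i x
    have hx : x ≠ u := fun he => (G.ne_of_adj h) he.symm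
    rcases mem_pair_of_card_two h2 huv x with h1 | h1
    · exact absurd h1 hx
    · exact h1 ▸ h

lemma exists_adj {V : Type*} [Fintype V] {G : SimpleGraph V} (hG : G.Connected)
    (hn : 2 ≤ Fintype.card V) : ∃ u v : V, G.Adj u v := by
  classical
  obtain ⟨u, v, huv⟩ := Fintype.exists_pair_of_one_lt_card (by omega : 1 < Fintype.card V)
  obtain ⟨w⟩ := hG.preconnected u v
  cases w with
  | nil => exact absurd rfl huv
  | cons h p => rename_i x; exact ⟨u, x, h⟩

lemma mem_triple_of_card_three {V : Type*} [Fintype V] [DecidableEq V]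
    (h3 : Fintype.card V = 3) {a b c : V} (hab : a ≠ b) (hac : a ≠ c) (hbc : b ≠ c)
    (x : V) : x = a ∨ x = b ∨ x = c := by
  have hcard : ({a, b, c} : Finset V).card = 3 := by
    rw [Finset.card_insert_of_notMem (by simp [hab, hac]),
      Finset.card_insert_of_notMem (by simpa using hbc), Finset.card_singleton]
  have huniv := Finset.eq_univ_of_card _ (hcard.trans h3.symm)
  have hx : x ∈ ({a, b, c} : Finset V) := huniv ▸ Finset.mem_univ x
  simpa using hx

lemma center_of_card_three {V : Type*} [Fintype V] {G : SimpleGraph V} (hG : G.Connected)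
    (h3 : Fintype.card V = 3) : ∃ b : V, ∀ x, x ≠ b → G.Adj b x := by
  classical
  obtain ⟨a, b, hab⟩ := exists_adj hG (by omega)
  have haneb : a ≠ b := G.ne_of_adj hab
  have hex : ∃ c : V, c ≠ a ∧ c ≠ b := by
    by_contra hcon
    push_neg at hcon
    have hcard : Fintype.card V ≤ 2 := by
      have hsub : (Finset.univ : Finset V) ⊆ {a, b} := by
        intro x _
        by_cases hxa : x = a
        · simp [hxa]
        · simp [hcon x hxa]
      calc Fintype.card V = (Finset.univ : Finset V).card := rfl
      _ ≤ ({a, b} : Finset V).card := Finset.card_le_card hsub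
      _ ≤ 2 := Finset.card_insert_le _ _ |>.trans (by simp)
    omega
  obtain ⟨c, hca, hcb⟩ := hex
  by_cases hbc : G.Adj b c
  · refine ⟨b, fun x hx => ?_⟩
    rcases mem_triple_of_card_three h3 haneb (Ne.symm hca) (Ne.symm hcb) x with h | h | h
    · exact h ▸ hab.symm
    · exact absurd h hx
    · exact h ▸ hbc
  · by_cases hac : G.Adj a c
    · refine ⟨a, fun x hx => ?_⟩
      rcases mem_triple_of_card_three h3 haneb (Ne.symm hca) (Ne.symm hcb) x with h | h | h
      · exact absurd h hx
      · exact h ▸ hab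
      · exact h ▸ hac
    · exfalso
      have kill : ∀ {u w : V} (p : G.Walk u w), w = c → (u = a ∨ u = b) → False := by
        intro u w p
        induction p with
        | nil => rintro rfl (rfl | rfl); exacts [hca rfl, hcb rfl]
        | cons h p ih =>
          rename_i s t w'
          intro hwc hu
          rcases mem_triple_of_card_three h3 haneb (Ne.symm hca) (Ne.symm hcb) t with h1 | h1 | h1
          · exact ih hwc (Or.inl h1)
          · exact ih hwc (Or.inr h1)
          · subst h1
            rcases hu with rfl | rfl
            · exact hac h
            · exact hbc h
      obtain ⟨w⟩ := hG.preconnected a c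
      exact kill w rfl (Or.inl rfl)

lemma sInf_eq_two {S : Set ℕ} (h2 : 2 ∈ S) (h0 : 0 ∉ S) (h1 : 1 ∉ S) : sInf S = 2 := by
  have hmem := Nat.sInf_mem (⟨2, h2⟩ : S.Nonempty)
  have hle := Nat.sInf_le h2
  rcases (by omega : sInf S = 0 ∨ sInf S = 1 ∨ sInf S = 2) with h | h | h
  · rw [h] at hmem; exact absurd hmem h0
  · rw [h] at hmem; exact absurd hmem h1
  · exact h

lemma sInf_eq_three {S : Set ℕ} (h3 : 3 ∈ S) (h0 : 0 ∉ S) (h1 : 1 ∉ S) (h2 : 2 ∉ S) :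
    sInf S = 3 := by
  have hmem := Nat.sInf_mem (⟨3, h3⟩ : S.Nonempty)
  have hle := Nat.sInf_le h3
  rcases (by omega : sInf S = 0 ∨ sInf S = 1 ∨ sInf S = 2 ∨ sInf S = 3) with h | h | h | h
  · rw [h] at hmem; exact absurd hmem h0
  · rw [h] at hmem; exact absurd hmem h1
  · rw [h] at hmem; exact absurd hmem h2
  · exact h

/-- swapping the first two copies is a nontrivial automorphism of the k-fold join. -/
def swapIso {V : Type*} (G : SimpleGraph V) (k : ℕ) (hk : 2 ≤ k) :
    kJoin G k ≃g kJoin G k where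
  toEquiv := Equiv.prodCongr (Equiv.swap ⟨0, by omega⟩ ⟨1, by omega⟩) (Equiv.refl V)
  map_rel_iff' := by
    intro x y
    show (kJoin G k).Adj _ _ ↔ (kJoin G k).Adj x y
    simp only [kJoin, Equiv.prodCongr_apply, Equiv.coe_refl, Prod.map_fst, Prod.map_snd,
      id_eq, ne_eq, EmbeddingLike.apply_eq_iff_eq]

lemma notmem_zero {V : Type*} [Fintype V] (G : SimpleGraph V) (k : ℕ) (hk : 2 ≤ k)
    (hV : Nonempty V) :
    (0 : ℕ) ∉ {d : ℕ | ∃ c : Sym2 (Fin k × V) → Fin d, ∀ f : kJoin G k ≃g kJoin G k,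
      (∀ e ∈ (kJoin G k).edgeSet, c (Sym2.map (⇑f) e) = c e) → ∀ v, f v = v} := by
  rintro ⟨c, -⟩
  obtain ⟨v⟩ := hV
  exact (c s((⟨0, by omega⟩, v), (⟨0, by omega⟩, v))).elim0

lemma notmem_one {V : Type*} [Fintype V] (G : SimpleGraph V) (k : ℕ) (hk : 2 ≤ k)
    (hV : Nonempty V) :
    (1 : ℕ) ∉ {d : ℕ | ∃ c : Sym2 (Fin k × V) → Fin d, ∀ f : kJoin G k ≃g kJoin G k,
      (∀ e ∈ (kJoin G k).edgeSet, c (Sym2.map (⇑f) e) = c e) → ∀ v, f v = v} := by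
  rintro ⟨c, hc⟩
  obtain ⟨v⟩ := hV
  have h := hc (swapIso G k hk) (fun e _ => Subsingleton.elim _ _) (⟨0, by omega⟩, v)
  have happ : (swapIso G k hk) ((⟨0, by omega⟩ : Fin k), v) = ((⟨1, by omega⟩ : Fin k), v) := by
    exact Prod.ext (Equiv.swap_apply_left _ _) rfl
  rw [happ] at h
  have := congrArg (fun p => (Prod.fst p).val) h
  simp at this


/-- symmetric boolean edge indicator of the special 6-vertex asymmetric graph. -/
def r6aux (a b : ℕ) : Bool :=
  (a == 0 && b == 1) || (a == 0 && b == 3) || (a == 0 && b == 5) ||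
  (a == 1 && b == 2) || (a == 3 && b == 4) || (a == 3 && b == 5)

def r6 (a b : ℕ) : Bool := r6aux a b || r6aux b a

lemma r6_comm (a b : ℕ) : r6 a b = r6 b a := Bool.or_comm _ _

lemma r6_asym : ∀ g : Equiv.Perm (Fin 6),
    (∀ a b : Fin 6, r6 a.val b.val = r6 (g a).val (g b).val) → ∀ x, g x = x := by
  decide

lemma r6_cases : ∀ p q : Fin 6, r6 p.val q.val = true →
    (p.val % 2 ≠ q.val % 2) ∨ (p.val = 3 ∧ q.val = 5) ∨ (p.val = 5 ∧ q.val = 3) := by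
  decide

def tbl (a b : Fin 4) : Fin 3 :=
  if (a = 1 ∧ b = 3) ∨ (a = 3 ∧ b = 1) then 1
  else if (a = 2 ∧ b = 3) ∨ (a = 3 ∧ b = 2) then 2
  else 0

lemma tbl_comm : ∀ a b : Fin 4, tbl a b = tbl b a := by decide

lemma tbl_rigid : ∀ g : Equiv.Perm (Fin 4),
    (∀ a b : Fin 4, a ≠ b → tbl (g a) (g b) = tbl a b) → ∀ x, g x = x := by decide

def edgP : Fin 6 → Fin 4 × Fin 4 := ![(0,1),(0,2),(0,3),(1,2),(1,3),(2,3)]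

def eIdx (a b : Fin 4) : Fin 6 :=
  if (a = 0 ∧ b = 1) ∨ (a = 1 ∧ b = 0) then 0
  else if (a = 0 ∧ b = 2) ∨ (a = 2 ∧ b = 0) then 1
  else if (a = 0 ∧ b = 3) ∨ (a = 3 ∧ b = 0) then 2
  else if (a = 1 ∧ b = 2) ∨ (a = 2 ∧ b = 1) then 3
  else if (a = 1 ∧ b = 3) ∨ (a = 3 ∧ b = 1) then 4
  else 5

lemma edgP_eIdx : ∀ a b : Fin 4, a ≠ b →
    ((edgP (eIdx a b)).1 = a ∧ (edgP (eIdx a b)).2 = b) ∨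
    ((edgP (eIdx a b)).1 = b ∧ (edgP (eIdx a b)).2 = a) := by decide

lemma k4_two : ∀ c : Fin 6 → Fin 2, ∃ g : Equiv.Perm (Fin 4),
    (∃ x, g x ≠ x) ∧ ∀ a b : Fin 4, a ≠ b → c (eIdx (g a) (g b)) = c (eIdx a b) := by
  decide

/-- k=2, n=3 : special distinguishing 2-coloring. -/
lemma exists_coloring_23 {V : Type*} [Fintype V] (G : SimpleGraph V) (hG : G.Connected)
    (h3 : Fintype.card V = 3) :
    ∃ c : Sym2 (Fin 2 × V) → Fin 2, ∀ f : kJoin G 2 ≃g kJoin G 2,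
      (∀ e ∈ (kJoin G 2).edgeSet, c (Sym2.map (⇑f) e) = c e) → ∀ v, f v = v := by
  obtain ⟨b, hb⟩ := center_of_card_three hG h3
  set e0 : V ≃ Fin 3 := (Fintype.equivFin V).trans (finCongr h3) with he0
  set e3 : V ≃ Fin 3 := e0.trans (Equiv.swap (e0 b) 1) with he3
  have he3b : e3 b = 1 := by
    simp [he3, Equiv.swap_apply_left]
  set pos : Fin 2 × V ≃ Fin 6 :=
    (posEquiv 2 3 (by norm_num) e3).trans (finCongr (by norm_num)) with hposdef
  have hval : ∀ x : Fin 2 × V, (pos x).val = (e3 x.2).val * 2 + x.1.val := by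
    intro x
    have h1 : (pos x).val = (posEquiv 2 3 (by norm_num) e3 x).val := by
      simp [hposdef]
    rw [h1, posEquiv_val]
  have hfst : ∀ x : Fin 2 × V, (pos x).val % 2 = x.1.val := by
    intro x
    rw [hval, Nat.mul_comm, Nat.mul_add_mod]
    exact Nat.mod_eq_of_lt x.1.isLt
  -- red edges are join edges
  have hRH : ∀ x y : Fin 2 × V, r6 (pos x).val (pos y).val = true → (kJoin G 2).Adj x y := by
    intro x y h
    rcases r6_cases (pos x) (pos y) h with hmod | ⟨h35a, h35b⟩ | ⟨h35a, h35b⟩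
    · rw [hfst, hfst] at hmod
      exact Or.inl (fun hxy => hmod (congrArg Fin.val hxy))
    · -- pos x = 3 = (0,b)-slot? (e3 x.2) = 1, x.1 = 1 ; pos y = 5 : e3 y.2 = 2, y.1 = 1
      have hx := hval x; have hy := hval y
      have hex : (e3 x.2).val = 1 ∧ x.1.val = 1 := by
        have := (e3 x.2).isLt; have := x.1.isLt; omega
      have hey : (e3 y.2).val = 2 ∧ y.1.val = 1 := by
        have := (e3 y.2).isLt; have := y.1.isLt; omega
      have hxb : x.2 = b := by
        apply e3.injective
        rw [he3b]; exact Fin.ext (by rw [hex.1]; rfl)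
      have hyb : y.2 ≠ b := by
        intro h'
        rw [h', he3b] at hey
        exact absurd hey.1 (by norm_num)
      refine Or.inr ⟨Fin.ext (by rw [hex.2, hey.2]), ?_⟩
      rw [hxb]
      exact hb y.2 hyb
    · have hx := hval x; have hy := hval y
      have hex : (e3 x.2).val = 2 ∧ x.1.val = 1 := by
        have := (e3 x.2).isLt; have := x.1.isLt; omega
      have hey : (e3 y.2).val = 1 ∧ y.1.val = 1 := by
        have := (e3 y.2).isLt; have := y.1.isLt; omega
      have hyb : y.2 = b := by
        apply e3.injective
        rw [he3b]; exact Fin.ext (by rw [hey.1]; rfl)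
      have hxb : x.2 ≠ b := by
        intro h'
        rw [h', he3b] at hex
        exact absurd hex.1 (by norm_num)
      refine Or.inr ⟨Fin.ext (by rw [hex.2, hey.2]), ?_⟩
      rw [hyb]
      exact (hb x.2 hxb).symm
  refine ⟨Sym2.lift ⟨fun x y => if r6 (pos x).val (pos y).val = true then (0 : Fin 2) else 1,
    fun x y => by
      show (if r6 (pos x).val (pos y).val = true then (0 : Fin 2) else 1) =
        if r6 (pos y).val (pos x).val = true then (0 : Fin 2) else 1
      rw [r6_comm]⟩, ?_⟩
  intro f hf
  have heq : ∀ x y : Fin 2 × V, (kJoin G 2).Adj x y →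
      ((if r6 (pos (f x)).val (pos (f y)).val = true then (0 : Fin 2) else 1) =
        if r6 (pos x).val (pos y).val = true then (0 : Fin 2) else 1) := by
    intro x y hxy
    have h2 := hf s(x, y) ((kJoin G 2).mem_edgeSet.mpr hxy)
    rw [Sym2.map_pair_eq] at h2
    simpa using h2
  set g : Fin 6 ≃ Fin 6 := pos.symm.trans (f.toEquiv.trans pos) with hgdef
  have hgapp : ∀ p, g p = pos (f (pos.symm p)) := fun p => rfl
  have hg : ∀ p q : Fin 6, r6 p.val q.val = r6 (g p).val (g q).val := by
    intro p q
    rw [hgapp, hgapp]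
    set x := pos.symm p with hx
    set y := pos.symm q with hy
    have hpx : pos x = p := pos.apply_symm_apply p
    have hpy : pos y = q := pos.apply_symm_apply q
    rw [← hpx, ← hpy]
    by_cases ha : r6 (pos x).val (pos y).val = true <;>
      by_cases hb' : r6 (pos (f x)).val (pos (f y)).val = true
    · rw [ha, hb']
    · exfalso
      have hadj : (kJoin G 2).Adj x y := hRH x y ha
      have := heq x y hadj
      rw [if_pos ha, if_neg hb'] at this
      exact absurd this (by decide)
    · exfalso
      have hadj : (kJoin G 2).Adj (f x) (f y) := hRH _ _ hb'
      have hxy : (kJoin G 2).Adj x y := f.map_adj_iff.mp hadj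
      have := heq x y hxy
      rw [if_pos hb', if_neg ha] at this
      exact absurd this (by decide)
    · rw [Bool.not_eq_true] at ha hb'
      rw [ha, hb']
  have hgid := r6_asym g hg
  intro v
  have h1 : pos (f v) = pos v := by
    have := hgid (pos v)
    rw [hgapp, pos.symm_apply_apply] at this
    exact this
  exact pos.injective h1

/-- in the K4 case the join is complete. -/
lemma kjoin_complete_adj {V : Type*} [Fintype V] {G : SimpleGraph V} (hG : G.Connected)
    (h2 : Fintype.card V = 2) (x y : Fin 2 × V) : (kJoin G 2).Adj x y ↔ x ≠ y := by
  constructor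
  · exact fun h => (kJoin G 2).ne_of_adj h
  · intro hne
    by_cases h1 : x.1 = y.1
    · have h2' : x.2 ≠ y.2 := fun h => hne (Prod.ext h1 h)
      exact Or.inr ⟨h1, adj_of_card_two hG h2 h2'⟩
    · exact Or.inl h1

/-- K4 : no distinguishing 2-edge-coloring. -/
lemma notmem_two_k4 {V : Type*} [Fintype V] (G : SimpleGraph V) (hG : G.Connected)
    (h2 : Fintype.card V = 2) :
    (2 : ℕ) ∉ {d : ℕ | ∃ c : Sym2 (Fin 2 × V) → Fin d, ∀ f : kJoin G 2 ≃g kJoin G 2,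
      (∀ e ∈ (kJoin G 2).edgeSet, c (Sym2.map (⇑f) e) = c e) → ∀ v, f v = v} := by
  rintro ⟨c, hc⟩
  have hcard : Fintype.card (Fin 2 × V) = 4 := by simp [h2]
  set φ : Fin 2 × V ≃ Fin 4 := Fintype.equivFinOfCardEq hcard with hφ
  set c6 : Fin 6 → Fin 2 := fun i => c s(φ.symm (edgP i).1, φ.symm (edgP i).2) with hc6
  obtain ⟨g, ⟨x0, hx0⟩, hgc⟩ := k4_two c6
  have key : ∀ u v : Fin 4, u ≠ v → c s(φ.symm u, φ.symm v) = c6 (eIdx u v) := by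
    intro u v huv
    rcases edgP_eIdx u v huv with ⟨ha, hb'⟩ | ⟨ha, hb'⟩
    · simp only [hc6]; rw [ha, hb']
    · simp only [hc6]; rw [ha, hb', Sym2.eq_swap]
  set f : kJoin G 2 ≃g kJoin G 2 :=
    ⟨(φ.trans g).trans φ.symm, by
      intro x y
      simp only [Equiv.trans_apply]
      rw [kjoin_complete_adj hG h2, kjoin_complete_adj hG h2]
      simp⟩ with hfdef
  have hfapp : ∀ z, f z = φ.symm (g (φ z)) := fun z => rfl
  have hpres : ∀ e ∈ (kJoin G 2).edgeSet, c (Sym2.map (⇑f) e) = c e := by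
    intro e he
    induction e with
    | _ x y =>
      have hadj : (kJoin G 2).Adj x y := (kJoin G 2).mem_edgeSet.mp he
      have hne : x ≠ y := (kJoin G 2).ne_of_adj hadj
      have hab : φ x ≠ φ y := fun h => hne (φ.injective h)
      have hgab : g (φ x) ≠ g (φ y) := fun h => hab (g.injective h)
      rw [Sym2.map_pair_eq, hfapp, hfapp]
      rw [key _ _ hgab, hgc _ _ hab, ← key _ _ hab]
      rw [φ.symm_apply_apply, φ.symm_apply_apply]
  have hid := hc f hpres (φ.symm x0)
  rw [hfapp, φ.apply_symm_apply] at hid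
  exact hx0 (φ.symm.injective hid)

/-- K4 : distinguishing 3-edge-coloring. -/
lemma mem_three_k4 {V : Type*} [Fintype V] (G : SimpleGraph V) (hG : G.Connected)
    (h2 : Fintype.card V = 2) :
    (3 : ℕ) ∈ {d : ℕ | ∃ c : Sym2 (Fin 2 × V) → Fin d, ∀ f : kJoin G 2 ≃g kJoin G 2,
      (∀ e ∈ (kJoin G 2).edgeSet, c (Sym2.map (⇑f) e) = c e) → ∀ v, f v = v} := by
  have hcard : Fintype.card (Fin 2 × V) = 4 := by simp [h2]
  set φ : Fin 2 × V ≃ Fin 4 := Fintype.equivFinOfCardEq hcard with hφ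
  refine ⟨Sym2.lift ⟨fun x y => tbl (φ x) (φ y), fun x y => tbl_comm _ _⟩, ?_⟩
  intro f hf
  set g : Fin 4 ≃ Fin 4 := (φ.symm.trans f.toEquiv).trans φ with hgdef
  have hgapp : ∀ a, g a = φ (f (φ.symm a)) := fun a => rfl
  have hyp : ∀ a b : Fin 4, a ≠ b → tbl (g a) (g b) = tbl a b := by
    intro a b hab
    have hne : φ.symm a ≠ φ.symm b := fun h => hab (φ.symm.injective h)
    have hadj : (kJoin G 2).Adj (φ.symm a) (φ.symm b) :=
      (kjoin_complete_adj hG h2 _ _).mpr hne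
    have h := hf s(φ.symm a, φ.symm b) ((kJoin G 2).mem_edgeSet.mpr hadj)
    rw [Sym2.map_pair_eq] at h
    simpa [hgapp] using h
  have hgid := tbl_rigid g hyp
  intro v
  have := hgid (φ v)
  rw [hgapp, φ.symm_apply_apply] at this
  exact φ.injective this

theorem distinguishingIndex_kJoin {V : Type*} [Fintype V] (G : SimpleGraph V) (k : ℕ)
    (hG : G.Connected) (hn : 2 ≤ Fintype.card V) (hk : 2 ≤ k) :
    (¬(k = 2 ∧ Fintype.card V = 2) → distinguishingIndex (kJoin G k) = 2) ∧
    ((k = 2 ∧ Fintype.card V = 2) → distinguishingIndex (kJoin G k) = 3) := by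
  classical
  have hV : Nonempty V := Fintype.card_pos_iff.mp (by omega)
  constructor
  · intro hne
    unfold distinguishingIndex
    refine sInf_eq_two ?_ (notmem_zero G k hk hV) (notmem_one G k hk hV)
    show ∃ c : Sym2 (Fin k × V) → Fin 2, ∀ f : kJoin G k ≃g kJoin G k,
      (∀ e ∈ (kJoin G k).edgeSet, c (Sym2.map (⇑f) e) = c e) → ∀ v, f v = v
    by_cases h23 : k = 2 ∧ Fintype.card V = 3
    · obtain ⟨hk2, h3⟩ := h23
      subst hk2
      exact exists_coloring_23 G hG h3
    · refine exists_coloring G k (if k = 2 then 4 else 3) hk rfl ?_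
      by_cases hk2 : k = 2
      · rw [if_pos hk2]
        subst hk2
        have h4 : 4 ≤ Fintype.card V := by
          have h2' : Fintype.card V ≠ 2 := fun h => hne ⟨rfl, h⟩
          have h3' : Fintype.card V ≠ 3 := fun h => h23 ⟨rfl, h⟩
          omega
        calc 4 + 3 ≤ 2 * 4 := by norm_num
        _ ≤ 2 * Fintype.card V := Nat.mul_le_mul_left 2 h4
      · rw [if_neg hk2]
        have hk3 : 3 ≤ k := by omega
        calc 3 + 3 = 3 * 2 := by norm_num
        _ ≤ k * Fintype.card V := Nat.mul_le_mul hk3 hn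
  · rintro ⟨hk2, hV2⟩
    subst hk2
    unfold distinguishingIndex
    exact sInf_eq_three (mem_three_k4 G hG hV2) (notmem_zero G 2 hk hV)
      (notmem_one G 2 hk hV) (notmem_two_k4 G hG hV2)
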